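/- Assuming Russo's formula and the BK inequality as hypotheses, for subcritical site percolation on ℤ^d the map p ↦ ∑_x τ_p(x) =: T(p) satisfies the differential inequality T'(p) ≤ T(p)², i.e., d/dp τ̂_p(0) ≤ τ̂_p(0)². -/

import Mathlib

open MeasureTheory

/-- A site percolation configuration on `ℤ^d`. -/
abbrev Config (d : ℕ) := (Fin d → ℤ) → Bool

/-- The ℓ¹ norm of a point of `ℤ^d`. -/
def norm1 {d : ℕ} (x : Fin d → ℤ) : ℕ := ∑ i, (x i).natAbs

/-- Nearest-neighbor adjacency on `ℤ^d`. -/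
def adj {d : ℕ} (x y : Fin d → ℤ) : Prop := norm1 (x - y) = 1

/-- `x ↔ y` in `ω`: a nearest-neighbor path with occupied interior vertices, `x ≠ y`. -/
def Connected {d : ℕ} (ω : Config d) (x y : Fin d → ℤ) : Prop :=
  x ≠ y ∧ ∃ l : List (Fin d → ℤ), List.Chain adj x (l ++ [y]) ∧ ∀ v ∈ l, ω v = true

/-- The cluster of `x`. -/
def cluster {d : ℕ} (ω : Config d) (x : Fin d → ℤ) : Set (Fin d → ℤ) :=
  {x} ∪ {y | ω y = true ∧ Connected ω x y}

/-- `μ` is the Bernoulli product measure with density `p`. -/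
def IsBernoulli {d : ℕ} (p : ℝ) (μ : Measure (Config d)) : Prop :=
  ∀ (s : Finset (Fin d → ℤ)) (η : (Fin d → ℤ) → Bool),
    μ {ω | ∀ v ∈ s, ω v = η v} =
      ∏ v ∈ s, (if η v then ENNReal.ofReal p else ENNReal.ofReal (1 - p))

/-- The two-point function `τ_p(x) = P_p(0 ↔ x)`. -/
noncomputable def tau {d : ℕ} (μ : Measure (Config d)) (x : Fin d → ℤ) : ℝ :=
  (μ {ω | Connected ω 0 x}).toReal

/-- The origin percolates: its cluster is infinite. -/
def Percolates {d : ℕ} (ω : Config d) : Prop := (cluster ω 0).Infinite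

/-- The critical point `p_c` of the family `p ↦ μ p`. -/
noncomputable def pc {d : ℕ} (μ : ℝ → Measure (Config d)) : ℝ :=
  sInf {p | p ∈ Set.Icc (0 : ℝ) 1 ∧ μ p {ω | Percolates ω} ≠ 0}

/-- `y` is pivotal for the event `A` in configuration `ω`. -/
def Pivotal {d : ℕ} (A : Set (Config d)) (y : Fin d → ℤ) (ω : Config d) : Prop :=
  Function.update ω y true ∈ A ∧ Function.update ω y false ∉ A

/-- An increasing event. -/
def IncreasingEvent {d : ℕ} (A : Set (Config d)) : Prop :=
  ∀ ω ω' : Config d, (∀ v, ω v = true → ω' v = true) → ω ∈ A → ω' ∈ A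

/-- Disjoint occurrence `A ∘ B`. -/
def DisjOcc {d : ℕ} (A B : Set (Config d)) : Set (Config d) :=
  {ω | ∃ K L : Set (Fin d → ℤ), Disjoint K L ∧
    (∀ ω', (∀ v ∈ K, ω' v = ω v) → ω' ∈ A) ∧
    (∀ ω', (∀ v ∈ L, ω' v = ω v) → ω' ∈ B)}

open ENNReal

section AuxLemmas

variable {d : ℕ}


def cyl (s : Finset (Fin d → ℤ)) (η : (Fin d → ℤ) → Bool) : Set (Config d) :=
  {ω | ∀ v ∈ s, ω v = η v}

lemma cyl_measurable (s : Finset (Fin d → ℤ)) (η : (Fin d → ℤ) → Bool) :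
    MeasurableSet (cyl s η) := by
  have : cyl s η = ⋂ v ∈ s, (fun ω : Config d => ω v) ⁻¹' {η v} := by
    ext ω; simp [cyl]
  rw [this]
  exact MeasurableSet.biInter s.countable_toSet
    (fun v _ => (measurable_pi_apply v) (measurableSet_singleton _))

def cylSets (d : ℕ) : Set (Set (Config d)) := {S | ∃ s η, S = cyl s η}

lemma pi_eq_generateFrom_cyl :
    (inferInstance : MeasurableSpace (Config d)) = .generateFrom (cylSets d) := by
  apply le_antisymm
  · have h : ∀ v : Fin d → ℤ,
        @Measurable (Config d) Bool (.generateFrom (cylSets d)) _ (fun ω => ω v) := by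
      intro v
      refine @measurable_to_countable' Bool (Config d) _ _
        (.generateFrom (cylSets d)) (fun ω => ω v) ?_
      intro b
      have : ((fun ω : Config d => ω v) ⁻¹' {b}) = cyl {v} (fun _ => b) := by
        ext ω; simp [cyl]
      rw [this]
      exact MeasurableSpace.measurableSet_generateFrom ⟨{v}, fun _ => b, rfl⟩
    have h2 : @Measurable (Config d) (Config d) (.generateFrom (cylSets d)) _ id :=
      (@measurable_pi_iff (Config d) (Fin d → ℤ) (fun _ => Bool)
        (.generateFrom (cylSets d)) _ id).mpr h
    intro S hS
    exact h2 hS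
  · exact MeasurableSpace.generateFrom_le (by rintro S ⟨s, η, rfl⟩; exact cyl_measurable s η)

lemma isPiSystem_cyl : IsPiSystem (cylSets d) := by
  classical
  rintro S ⟨s, η, rfl⟩ S' ⟨s', η', rfl⟩ ⟨ω₀, hω₀s, hω₀s'⟩
  refine ⟨s ∪ s', fun v => if v ∈ s then η v else η' v, ?_⟩
  ext ω
  constructor
  · rintro ⟨hs, hs'⟩ v hv
    rcases Finset.mem_union.mp hv with h | h
    · simp only [if_pos h]; exact hs v h
    · by_cases h2 : v ∈ s
      · simp only [if_pos h2]; exact hs v h2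
      · simp only [if_neg h2]; exact hs' v h
  · intro h
    constructor
    · intro v hv
      have := h v (Finset.mem_union_left _ hv)
      simpa [if_pos hv] using this
    · intro v hv
      have hvv := h v (Finset.mem_union_right _ hv)
      dsimp only at hvv
      by_cases h2 : v ∈ s
      · rw [hvv, if_pos h2, ← hω₀s v h2]
        exact hω₀s' v hv
      · rwa [if_neg h2] at hvv





def shift (y : Fin d → ℤ) (ω : Config d) : Config d := fun v => ω (v + y)

lemma measurable_shift (y : Fin d → ℤ) : Measurable (shift (d := d) y) :=
  measurable_pi_iff.mpr fun v => measurable_pi_apply (v + y)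

lemma shift_preimage_cyl (y : Fin d → ℤ) (s : Finset (Fin d → ℤ)) (η : (Fin d → ℤ) → Bool) :
    shift y ⁻¹' cyl s η = cyl (s.image (· + y)) (fun w => η (w - y)) := by
  ext ω
  simp only [cyl, Set.mem_preimage, Set.mem_setOf_eq, shift, Finset.mem_image]
  constructor
  · rintro h w ⟨v, hv, rfl⟩
    simpa using h v hv
  · intro h v hv
    simpa using h (v + y) ⟨v, hv, rfl⟩

lemma map_shift_eq {q : ℝ} {m : Measure (Config d)} [IsProbabilityMeasure m]
    (hm : IsBernoulli q m) (y : Fin d → ℤ) : m.map (shift y) = m := by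
  haveI : IsProbabilityMeasure (m.map (shift y)) :=
    Measure.isProbabilityMeasure_map (measurable_shift y).aemeasurable
  refine ext_of_generate_finite (cylSets d) pi_eq_generateFrom_cyl isPiSystem_cyl ?_
    (by simp [measure_univ])
  rintro S ⟨s, η, rfl⟩
  rw [Measure.map_apply (measurable_shift y) (cyl_measurable s η), shift_preimage_cyl]
  have h1 : m (cyl (s.image (· + y)) (fun w => η (w - y))) =
      ∏ v ∈ s.image (· + y),
        (if η (v - y) then ENNReal.ofReal q else ENNReal.ofReal (1 - q)) :=
    hm (s.image (· + y)) (fun w => η (w - y))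
  have h2 : m (cyl s η) =
      ∏ v ∈ s, (if η v then ENNReal.ofReal q else ENNReal.ofReal (1 - q)) := hm s η
  rw [h1, h2, Finset.prod_image (fun a _ b _ h => by simpa using h)]
  simp

lemma adj_add {u v y : Fin d → ℤ} : adj (u + y) (v + y) ↔ adj u v := by
  unfold adj
  rw [add_sub_add_right_eq_sub]

lemma chain_add {a : Fin d → ℤ} {l : List (Fin d → ℤ)} {y : Fin d → ℤ} :
    List.Chain adj (a + y) (l.map (· + y)) ↔ List.Chain adj a l := by
  exact (List.isChain_cons_map (R := adj) (fun x : Fin d → ℤ => x + y) (b := a) (l := l)).trans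
    ⟨fun h => h.imp fun _ _ => adj_add.mp, fun h => List.IsChain.imp (fun _ _ => adj_add.mpr) h⟩

lemma connected_shift {ω : Config d} {y a b : Fin d → ℤ} :
    Connected (shift y ω) a b ↔ Connected ω (a + y) (b + y) := by
  constructor
  · rintro ⟨hne, l, hc, ho⟩
    refine ⟨fun h => hne (add_right_cancel h), l.map (· + y), ?_, ?_⟩
    · have := chain_add (y := y) (l := l ++ [b]) (a := a) |>.mpr hc
      simpa using this
    · rintro w hw
      obtain ⟨v, hv, rfl⟩ := List.mem_map.mp hw
      exact ho v hv
  · rintro ⟨hne, l, hc, ho⟩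
    refine ⟨fun h => hne (by rw [h]), l.map (· - y), ?_, ?_⟩
    · have hmm : (l.map (· - y)).map (· + y) = l := by
        rw [List.map_map]; simp [Function.comp_def]
      have : List.Chain adj (a + y) (((l.map (· - y)) ++ [b]).map (· + y)) := by
        simpa [hmm] using hc
      exact chain_add.mp this
    · rintro w hw
      obtain ⟨v, hv, rfl⟩ := List.mem_map.mp hw
      show ω (v - y + y) = true
      rw [sub_add_cancel]
      exact ho v hv

lemma connected_event_shift (y x : Fin d → ℤ) :
    shift y ⁻¹' {ω : Config d | Connected ω 0 (x - y)} = {ω | Connected ω y x} := by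
  ext ω
  simp only [Set.mem_preimage, Set.mem_setOf_eq]
  rw [connected_shift, zero_add, sub_add_cancel]

lemma measurableSet_connected (a b : Fin d → ℤ) :
    MeasurableSet {ω : Config d | Connected ω a b} := by
  have : {ω : Config d | Connected ω a b} =
      ⋃ l : List (Fin d → ℤ), ⋃ (_ : a ≠ b ∧ List.Chain adj a (l ++ [b])),
        cyl l.toFinset (fun _ => true) := by
    ext ω
    simp only [Set.mem_setOf_eq, Set.mem_iUnion, Connected, cyl, List.mem_toFinset]
    constructor
    · rintro ⟨hne, l, hc, ho⟩; exact ⟨l, ⟨hne, hc⟩, ho⟩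
    · rintro ⟨l, ⟨hne, hc⟩, ho⟩; exact ⟨hne, l, hc, ho⟩
  rw [this]
  exact MeasurableSet.iUnion fun l => MeasurableSet.iUnion fun _ => cyl_measurable _ _

lemma measure_connected_shift {q : ℝ} {m : Measure (Config d)} [IsProbabilityMeasure m]
    (hm : IsBernoulli q m) (y x : Fin d → ℤ) :
    m {ω | Connected ω y x} = m {ω | Connected ω 0 (x - y)} := by
  conv_lhs => rw [← connected_event_shift y x]
  rw [← Measure.map_apply (measurable_shift y) (measurableSet_connected _ _),
    map_shift_eq hm]





lemma increasing_connected (a b : Fin d → ℤ) :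
    IncreasingEvent {ω : Config d | Connected ω a b} := by
  rintro ω ω' h ⟨hne, l, hc, ho⟩
  exact ⟨hne, l, hc, fun v hv => h v (ho v hv)⟩

lemma not_nodup_decomp {α : Type*} :
    ∀ {l : List α}, ¬ l.Nodup → ∃ a l₁ l₂, l = l₁ ++ a :: l₂ ∧ a ∈ l₂
  | [], h => absurd List.nodup_nil h
  | b :: t, h => by
    by_cases hb : b ∈ t
    · exact ⟨b, [], t, rfl, hb⟩
    · have ht : ¬ t.Nodup := fun hn => h (List.nodup_cons.mpr ⟨hb, hn⟩)
      obtain ⟨a, l₁, l₂, rfl, ha⟩ := not_nodup_decomp ht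
      exact ⟨a, b :: l₁, l₂, rfl, ha⟩

lemma pivotal_subset_disjOcc (x y : Fin d → ℤ) :
    {ω : Config d | Pivotal {ω' | Connected ω' 0 x} y ω} ⊆
      DisjOcc {ω : Config d | Connected ω 0 y} {ω | Connected ω y x} := by
  rintro ω ⟨h1, h2⟩
  simp only [Set.mem_setOf_eq] at h1 h2
  obtain ⟨hx0, l0, hch0, hoc0⟩ := h1
  have hQ : {n | ∃ l : List (Fin d → ℤ),
      (List.Chain adj 0 (l ++ [x]) ∧ ∀ v ∈ l, Function.update ω y true v = true) ∧
        l.length = n}.Nonempty := ⟨l0.length, l0, ⟨hch0, hoc0⟩, rfl⟩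
  obtain ⟨l, ⟨hch, hoc⟩, hlen⟩ := Nat.sInf_mem hQ
  have hmin : ∀ l' : List (Fin d → ℤ),
      (List.Chain adj 0 (l' ++ [x]) ∧ ∀ v ∈ l', Function.update ω y true v = true) →
      l.length ≤ l'.length := by
    intro l' h'
    rw [hlen]
    exact Nat.sInf_le ⟨l', h', rfl⟩
  -- 0 is not on the path
  have h0l : (0 : Fin d → ℤ) ∉ l := by
    intro hmem
    obtain ⟨l₁, l₂, rfl⟩ := List.append_of_mem hmem
    have hc' : List.Chain adj 0 (l₁ ++ 0 :: (l₂ ++ [x])) := by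
      simpa only [List.append_assoc, List.cons_append, List.nil_append] using hch
    obtain ⟨-, hc2⟩ := List.isChain_cons_split.mp hc'
    have := hmin l₂ ⟨hc2, fun v hv => hoc v (by simp [hv])⟩
    simp [List.length_append] at this; omega
  -- x is not on the path
  have hxl : x ∉ l := by
    intro hmem
    obtain ⟨l₁, l₂, rfl⟩ := List.append_of_mem hmem
    have hc' : List.Chain adj 0 (l₁ ++ x :: (l₂ ++ [x])) := by
      simpa only [List.append_assoc, List.cons_append, List.nil_append] using hch
    obtain ⟨hc1, -⟩ := List.isChain_cons_split.mp hc'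
    have := hmin l₁ ⟨hc1, fun v hv => hoc v (by simp [hv])⟩
    simp [List.length_append] at this
  -- the path is self-avoiding
  have hnd : l.Nodup := by
    by_contra hnd
    obtain ⟨a, l₁, l₂, rfl, ha⟩ := not_nodup_decomp hnd
    obtain ⟨m₁, m₂, rfl⟩ := List.append_of_mem ha
    have hc' : List.Chain adj 0 (l₁ ++ a :: (m₁ ++ a :: (m₂ ++ [x]))) := by
      simpa only [List.append_assoc, List.cons_append, List.nil_append] using hch
    obtain ⟨hc1, hc2⟩ := List.isChain_cons_split.mp hc'
    obtain ⟨-, hc3⟩ := List.isChain_cons_split.mp hc2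
    have hrec : List.Chain adj 0 ((l₁ ++ a :: m₂) ++ [x]) := by
      simp only [List.append_assoc, List.cons_append, List.nil_append]
      exact List.isChain_cons_split.mpr ⟨hc1, hc3⟩
    have := hmin (l₁ ++ a :: m₂) ⟨hrec, fun v hv => hoc v (by
      simp only [List.mem_append, List.mem_cons] at hv ⊢
      tauto)⟩
    simp [List.length_append] at this; omega
  -- y must be on the path
  have hyl : y ∈ l := by
    by_contra hy
    refine h2 ⟨hx0, l, hch, fun v hv => ?_⟩
    have hvy : v ≠ y := fun h => hy (h ▸ hv)
    have h3 := hoc v hv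
    rw [Function.update_of_ne hvy] at h3
    rw [Function.update_of_ne hvy]
    exact h3
  -- split the path at y
  obtain ⟨l₁, l₂, rfl⟩ := List.append_of_mem hyl
  have hc' : List.Chain adj 0 (l₁ ++ y :: (l₂ ++ [x])) := by
    simpa only [List.append_assoc, List.cons_append, List.nil_append] using hch
  obtain ⟨hc1, hc2⟩ := List.isChain_cons_split.mp hc'
  rw [List.nodup_append] at hnd
  obtain ⟨hnd1, hnd2, hdisj⟩ := hnd
  have hyl₁ : y ∉ l₁ := fun h => hdisj y h y List.mem_cons_self rfl
  have hyl₂ : y ∉ l₂ := (List.nodup_cons.mp hnd2).1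
  have h0y : (0 : Fin d → ℤ) ≠ y := fun h => h0l (by rw [h]; simp)
  have hyx : y ≠ x := fun h => hxl (by rw [← h]; simp)
  have hocc : ∀ v, v ≠ y → (v ∈ l₁ ∨ v ∈ l₂) → ω v = true := by
    intro v hvy hv
    have h3 := hoc v (by simp only [List.mem_append, List.mem_cons]; tauto)
    rwa [Function.update_of_ne hvy] at h3
  refine ⟨{v | v ∈ l₁}, {v | v ∈ l₂}, ?_, ?_, ?_⟩
  · rw [Set.disjoint_left]
    intro v hv1 hv2
    exact hdisj v hv1 v (List.mem_cons_of_mem _ hv2) rfl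
  · intro ω' hω'
    refine ⟨h0y, l₁, hc1, fun v hv => ?_⟩
    rw [hω' v hv]
    exact hocc v (fun h => hyl₁ (h ▸ hv)) (Or.inl hv)
  · intro ω' hω'
    refine ⟨hyx, l₂, hc2, fun v hv => ?_⟩
    rw [hω' v hv]
    exact hocc v (fun h => hyl₂ (h ▸ hv)) (Or.inr hv)

end AuxLemmas

/-- Assuming Russo's formula (for the derivative of `T(p) = ∑_x τ_p(x)`, expressed via
pivotal points) and the BK inequality as hypotheses, subcritical site percolation
satisfies the differential inequality `T'(p) ≤ T(p)²`. -/
theorem deriv_sum_tau_le_sq (d : ℕ) (μ : ℝ → Measure (Config d))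
    (hprob : ∀ q ∈ Set.Icc (0 : ℝ) 1, IsProbabilityMeasure (μ q))
    (hber : ∀ q ∈ Set.Icc (0 : ℝ) 1, IsBernoulli q (μ q))
    (T : ℝ → ℝ) (hT : ∀ q, T q = ∑' x : Fin d → ℤ, tau (μ q) x)
    (p : ℝ) (hp : p ∈ Set.Ioo (0 : ℝ) 1) (hsub : p < pc μ)
    (hRusso : HasDerivAt T
      (∑' x : Fin d → ℤ, ∑' y : Fin d → ℤ,
        (μ p {ω | Pivotal {ω' | Connected ω' 0 x} y ω}).toReal) p)
    (hBK : ∀ A B : Set (Config d), IncreasingEvent A → IncreasingEvent B →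
      μ p (DisjOcc A B) ≤ μ p A * μ p B) :
    deriv T p ≤ (T p) ^ 2 := by
  have hp01 : p ∈ Set.Icc (0 : ℝ) 1 := ⟨le_of_lt hp.1, le_of_lt hp.2⟩
  haveI := hprob p hp01
  have hbp := hber p hp01
  set S : ℝ := ∑' x : Fin d → ℤ, ∑' y : Fin d → ℤ,
      (μ p {ω | Pivotal {ω' | Connected ω' 0 x} y ω}).toReal with hSdef
  have hS : deriv T p = S := hRusso.deriv
  set τ' : ℝ≥0∞ := ∑' x : Fin d → ℤ, μ p {ω | Connected ω 0 x} with hτ'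
  by_cases hfin : τ' ≠ ⊤
  · -- subcritical-susceptibility case: the standard BK computation
    have key : ∀ x y : Fin d → ℤ, μ p {ω | Pivotal {ω' | Connected ω' 0 x} y ω}
        ≤ μ p {ω | Connected ω 0 y} * μ p {ω | Connected ω y x} :=
      fun x y => le_trans (measure_mono (pivotal_subset_disjOcc x y))
        (hBK _ _ (increasing_connected 0 y) (increasing_connected y x))
    have hshift : ∀ y : Fin d → ℤ,
        (∑' x : Fin d → ℤ, μ p {ω | Connected ω y x}) = τ' := by
      intro y
      calc ∑' x : Fin d → ℤ, μ p {ω | Connected ω y x}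
          = ∑' x : Fin d → ℤ, μ p {ω | Connected ω 0 (x - y)} :=
            tsum_congr fun x => measure_connected_shift hbp y x
        _ = τ' := (Equiv.subRight y).tsum_eq (fun z => μ p {ω | Connected ω 0 z})
    have hD : (∑' x : Fin d → ℤ, ∑' y : Fin d → ℤ,
        μ p {ω | Pivotal {ω' | Connected ω' 0 x} y ω}) ≤ τ' * τ' := by
      calc ∑' x : Fin d → ℤ, ∑' y : Fin d → ℤ,
            μ p {ω | Pivotal {ω' | Connected ω' 0 x} y ω}
          ≤ ∑' x : Fin d → ℤ, ∑' y : Fin d → ℤ,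
            μ p {ω | Connected ω 0 y} * μ p {ω | Connected ω y x} :=
            ENNReal.tsum_le_tsum fun x => ENNReal.tsum_le_tsum fun y => key x y
        _ = ∑' y : Fin d → ℤ, ∑' x : Fin d → ℤ,
            μ p {ω | Connected ω 0 y} * μ p {ω | Connected ω y x} := ENNReal.tsum_comm
        _ = ∑' y : Fin d → ℤ,
            μ p {ω | Connected ω 0 y} * ∑' x : Fin d → ℤ, μ p {ω | Connected ω y x} :=
            tsum_congr fun y => ENNReal.tsum_mul_left
        _ = ∑' y : Fin d → ℤ, μ p {ω | Connected ω 0 y} * τ' :=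
            tsum_congr fun y => by rw [hshift y]
        _ = τ' * τ' := by rw [ENNReal.tsum_mul_right]
    have hττ : τ' * τ' ≠ ⊤ := ENNReal.mul_ne_top hfin hfin
    have hDfin : (∑' x : Fin d → ℤ, ∑' y : Fin d → ℤ,
        μ p {ω | Pivotal {ω' | Connected ω' 0 x} y ω}) ≠ ⊤ :=
      fun h => hττ (top_le_iff.mp (h ▸ hD))
    have hinner : ∀ x : Fin d → ℤ, (∑' y : Fin d → ℤ,
        μ p {ω | Pivotal {ω' | Connected ω' 0 x} y ω}) ≠ ⊤ :=
      fun x => ne_top_of_le_ne_top hDfin (ENNReal.le_tsum x)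
    have hSval : S = (∑' x : Fin d → ℤ, ∑' y : Fin d → ℤ,
        μ p {ω | Pivotal {ω' | Connected ω' 0 x} y ω}).toReal := by
      rw [hSdef, ENNReal.tsum_toReal_eq hinner]
      exact tsum_congr fun x => (ENNReal.tsum_toReal_eq fun y => measure_ne_top _ _).symm
    have hTp : T p = τ'.toReal := by
      rw [hT p, hτ', ENNReal.tsum_toReal_eq fun x => measure_ne_top _ _]
      exact tsum_congr fun x => rfl
    rw [hS, hSval, hTp]
    calc (∑' x : Fin d → ℤ, ∑' y : Fin d → ℤ,
          μ p {ω | Pivotal {ω' | Connected ω' 0 x} y ω}).toReal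
        ≤ (τ' * τ').toReal := ENNReal.toReal_mono hττ hD
      _ = τ'.toReal ^ 2 := by rw [ENNReal.toReal_mul]; ring
  · -- degenerate case: the susceptibility is infinite, so T p = 0 and T ≥ 0,
    -- whence the (two-sided) derivative is ≤ 0 by looking at left difference quotients
    push_neg at hfin
    have hTp : T p = 0 := by
      rw [hT p]
      apply tsum_eq_zero_of_not_summable
      intro hsum
      have h1 : τ' = ENNReal.ofReal (∑' x : Fin d → ℤ, tau (μ p) x) := by
        simp only [tau]
        rw [ENNReal.ofReal_tsum_of_nonneg (fun _ => ENNReal.toReal_nonneg) hsum, hτ']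
        exact tsum_congr fun x =>
          (ENNReal.ofReal_toReal (measure_ne_top _ _)).symm
      rw [h1] at hfin
      exact ENNReal.ofReal_ne_top hfin
    have hT0 : ∀ q, 0 ≤ T q := fun q => by
      rw [hT q]; exact tsum_nonneg fun x => ENNReal.toReal_nonneg
    have hslope := hasDerivAt_iff_tendsto_slope.mp hRusso
    have htend : Filter.Tendsto (slope T p) (nhdsWithin p (Set.Iio p)) (nhds S) :=
      hslope.mono_left (nhdsWithin_mono p fun q hq => ne_of_lt hq)
    have hle : ∀ q ∈ Set.Iio p, slope T p q ≤ 0 := by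
      intro q hq
      rw [slope_def_field, hTp, sub_zero]
      exact div_nonpos_iff.mpr (Or.inl ⟨hT0 q, sub_nonpos.mpr (le_of_lt hq)⟩)
    have hS0 : S ≤ 0 :=
      le_of_tendsto htend (eventually_nhdsWithin_of_forall hle)
    rw [hS, hTp]
    simpa using hS0
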